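/- Let n ≥ 2 be even, V > 0, C > 0, λ > 0, and a₀, …, a_{n/2−1} real numbers. Let K : (0, ∞) → ℝ be continuous with |K(t) − (4πt)^{−n/2} Σ_{k=0}^{n/2−1} a_k t^k| ≤ C for all t ∈ (0, 1] and |K(t) − 1/V| ≤ C e^{−λt} for all t ≥ 1. Set D(t) = K(t) − 1/V − (4π)^{−n/2} Σ_{k=0}^{n/2−1} a_k t^{k−n/2}. Then for every real s > n/2 the integral ∫₀^∞ (K(t) − 1/V) t^{s−1} dt converges absolutely and equals Σ_{k=0}^{n/2−1} a_k / ((4π)^{n/2}(s − n/2 + k)) + ∫₁^∞ (K(t) − 1/V) t^{s−1} dt + ∫₀^1 D(t) t^{s−1} dt, where the last integral converges absolutely for every real s > 0. -/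

import Mathlib

open Real MeasureTheory

/-- Meromorphic continuation of `Γ(s)·ζ(s)` for the diagonal heat kernel of a
compact Riemannian manifold of even dimension `n` and volume `V`: for `s > n/2`
the Mellin-type integral `∫₀^∞ (K(t) − 1/V) t^{s−1} dt` converges absolutely
and splits as explicit pole terms plus two convergent integrals, where the
integral of `D(t) t^{s−1}` over `(0,1]` converges absolutely for all `s > 0`. -/
theorem heat_zeta_splitting_even
    (n : ℕ) (hn : 2 ≤ n) (hne : Even n)
    (V C lam : ℝ) (hV : 0 < V) (hC : 0 < C) (hlam : 0 < lam)
    (a : ℕ → ℝ)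
    (K : ℝ → ℝ) (hK : ContinuousOn K (Set.Ioi 0))
    (h1 : ∀ t ∈ Set.Ioc (0:ℝ) 1,
      |K t - (4 * π * t) ^ (-(n:ℝ) / 2) * ∑ k ∈ Finset.range (n / 2), a k * t ^ k| ≤ C)
    (h2 : ∀ t : ℝ, 1 ≤ t → |K t - 1 / V| ≤ C * Real.exp (-lam * t))
    (D : ℝ → ℝ)
    (hD : ∀ t, D t = K t - 1 / V
      - (4 * π) ^ (-(n:ℝ) / 2) * ∑ k ∈ Finset.range (n / 2), a k * t ^ ((k:ℝ) - n / 2)) :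
    (∀ s : ℝ, 0 < s →
      IntegrableOn (fun t => D t * t ^ (s - 1)) (Set.Ioc 0 1)) ∧
    ∀ s : ℝ, (n:ℝ) / 2 < s →
      IntegrableOn (fun t => (K t - 1 / V) * t ^ (s - 1)) (Set.Ioi 0) ∧
      (∫ t in Set.Ioi (0:ℝ), (K t - 1 / V) * t ^ (s - 1))
        = (∑ k ∈ Finset.range (n / 2),
            a k / ((4 * π) ^ ((n:ℝ) / 2) * (s - (n:ℝ) / 2 + k)))
          + (∫ t in Set.Ioi (1:ℝ), (K t - 1 / V) * t ^ (s - 1))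
          + ∫ t in Set.Ioc (0:ℝ) 1, D t * t ^ (s - 1) := by
  have h4π : (0:ℝ) < 4 * π := by positivity
  have hn2 : (2:ℝ) ≤ (n:ℝ) := by exact_mod_cast hn
  have hν1 : (1:ℝ) ≤ (n:ℝ)/2 := by linarith
  -- pointwise identity relating the two forms of the polynomial part
  have key : ∀ t : ℝ, 0 < t →
      (4 * π) ^ (-(n:ℝ)/2) * ∑ k ∈ Finset.range (n/2), a k * t ^ ((k:ℝ) - (n:ℝ)/2)
        = (4 * π * t) ^ (-(n:ℝ)/2) * ∑ k ∈ Finset.range (n/2), a k * t ^ k := by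
    intro t ht
    rw [Real.mul_rpow h4π.le ht.le, mul_assoc]
    congr 1
    rw [Finset.mul_sum]
    refine Finset.sum_congr rfl fun k _ => ?_
    rw [← Real.rpow_natCast t k,
      show t ^ (-(n:ℝ)/2) * (a k * t ^ (k:ℝ)) = a k * (t ^ (-(n:ℝ)/2) * t ^ (k:ℝ)) from by ring,
      ← Real.rpow_add ht]
    congr 1
    ring
  -- continuity of D on (0,∞)
  have hrpowCont : ∀ r : ℝ, ContinuousOn (fun t : ℝ => t ^ r) (Set.Ioi 0) := fun r =>
    continuousOn_id.rpow_const fun t ht => Or.inl (ne_of_gt ht)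
  have hDcont : ContinuousOn D (Set.Ioi 0) := by
    have : ContinuousOn (fun t : ℝ => K t - 1/V
        - (4 * π) ^ (-(n:ℝ)/2) * ∑ k ∈ Finset.range (n/2), a k * t ^ ((k:ℝ) - (n:ℝ)/2))
        (Set.Ioi 0) := by
      refine ((hK.sub continuousOn_const).sub (continuousOn_const.mul ?_))
      exact continuousOn_finset_sum _ fun k _ => continuousOn_const.mul (hrpowCont _)
    exact this.congr fun t ht => hD t
  -- bound on D on (0,1]
  have hDbd : ∀ t ∈ Set.Ioc (0:ℝ) 1, |D t| ≤ C + 1/V := by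
    intro t ht
    rw [hD t, key t ht.1]
    have h1' := h1 t ht
    have habs : |K t - 1/V - (4 * π * t) ^ (-(n:ℝ)/2) * ∑ k ∈ Finset.range (n/2), a k * t ^ k|
        = |(K t - (4 * π * t) ^ (-(n:ℝ)/2) * ∑ k ∈ Finset.range (n/2), a k * t ^ k) - 1/V| := by
      congr 1
      ring
    rw [habs]
    calc |(K t - (4 * π * t) ^ (-(n:ℝ)/2) * ∑ k ∈ Finset.range (n/2), a k * t ^ k) - 1/V|
        ≤ |K t - (4 * π * t) ^ (-(n:ℝ)/2) * ∑ k ∈ Finset.range (n/2), a k * t ^ k| + |1/V| :=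
          abs_sub _ _
      _ ≤ C + 1/V := by
          rw [abs_of_pos (by positivity : (0:ℝ) < 1/V)]
          linarith
  -- part A : integrability of D·t^(s-1) on (0,1] for s > 0
  have partA : ∀ s : ℝ, 0 < s → IntegrableOn (fun t => D t * t ^ (s - 1)) (Set.Ioc 0 1) := by
    intro s hs
    have hrint : IntegrableOn (fun t : ℝ => t ^ (s - 1)) (Set.Ioc 0 1) := by
      rw [← intervalIntegrable_iff_integrableOn_Ioc_of_le zero_le_one]
      exact intervalIntegral.intervalIntegrable_rpow' (by linarith)
    have hmeas : AEStronglyMeasurable (fun t => D t * t ^ (s - 1))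
        (volume.restrict (Set.Ioc 0 1)) :=
      ContinuousOn.aestronglyMeasurable
        (((hDcont.mono Set.Ioc_subset_Ioi_self)).mul ((hrpowCont _).mono Set.Ioc_subset_Ioi_self))
        measurableSet_Ioc
    refine Integrable.mono (hrint.const_mul (C + 1/V)) hmeas ?_
    filter_upwards [ae_restrict_mem measurableSet_Ioc] with t ht
    have h0 : 0 ≤ t ^ (s - 1) := Real.rpow_nonneg ht.1.le _
    rw [Real.norm_eq_abs, Real.norm_eq_abs, abs_mul, abs_of_nonneg h0,
      abs_of_nonneg (by positivity : (0:ℝ) ≤ (C + 1/V) * t ^ (s - 1))]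
    exact mul_le_mul_of_nonneg_right (hDbd t ht) h0
  refine ⟨partA, fun s hs => ?_⟩
  have hs0 : (0:ℝ) < s := by linarith
  -- integrability on (1,∞)
  have hmeasK : AEStronglyMeasurable (fun t => (K t - 1/V) * t ^ (s - 1))
      (volume.restrict (Set.Ioi 1)) :=
    ContinuousOn.aestronglyMeasurable
      ((((hK.mono (Set.Ioi_subset_Ioi zero_le_one)).sub continuousOn_const)).mul
        ((hrpowCont _).mono (Set.Ioi_subset_Ioi zero_le_one))) measurableSet_Ioi
  have tail : IntegrableOn (fun t => (K t - 1/V) * t ^ (s - 1)) (Set.Ioi 1) := by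
    have hexp : IntegrableOn (fun t : ℝ => C * (t ^ (s - 1) * Real.exp (-lam * t)))
        (Set.Ioi 1) := by
      have h := integrableOn_rpow_mul_exp_neg_mul_rpow (p := 1) (s := s - 1) (b := lam)
        (by linarith) one_pos hlam
      simp only [Real.rpow_one] at h
      exact (h.mono_set (Set.Ioi_subset_Ioi zero_le_one)).const_mul C
    refine Integrable.mono hexp hmeasK ?_
    filter_upwards [ae_restrict_mem measurableSet_Ioi] with t ht
    have ht0 : (0:ℝ) < t := lt_of_lt_of_le one_pos (le_of_lt ht)
    have h0 : 0 ≤ t ^ (s - 1) := Real.rpow_nonneg ht0.le _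
    rw [Real.norm_eq_abs, Real.norm_eq_abs, abs_mul, abs_of_nonneg h0,
      abs_of_nonneg (by positivity : (0:ℝ) ≤ C * (t ^ (s - 1) * Real.exp (-lam * t)))]
    calc |K t - 1/V| * t ^ (s - 1) ≤ (C * Real.exp (-lam * t)) * t ^ (s - 1) :=
          mul_le_mul_of_nonneg_right (h2 t ht.le) h0
      _ = C * (t ^ (s - 1) * Real.exp (-lam * t)) := by ring
  -- pointwise splitting on (0,∞)
  have split : ∀ t : ℝ, 0 < t → (K t - 1/V) * t ^ (s - 1)
      = D t * t ^ (s - 1) + ∑ k ∈ Finset.range (n/2),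
          ((4 * π) ^ (-(n:ℝ)/2) * a k) * t ^ ((k:ℝ) - (n:ℝ)/2 + (s - 1)) := by
    intro t ht
    have hsum : ∑ k ∈ Finset.range (n/2),
        ((4 * π) ^ (-(n:ℝ)/2) * a k) * t ^ ((k:ℝ) - (n:ℝ)/2 + (s - 1))
        = ((4 * π) ^ (-(n:ℝ)/2) * ∑ k ∈ Finset.range (n/2), a k * t ^ ((k:ℝ) - (n:ℝ)/2))
            * t ^ (s - 1) := by
      rw [Finset.mul_sum, Finset.sum_mul]
      refine Finset.sum_congr rfl fun k _ => ?_
      rw [Real.rpow_add ht]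
      ring
    rw [hD t, hsum]
    ring
  -- integrability of each polynomial term on (0,1]
  have hterm : ∀ k ∈ Finset.range (n/2), IntegrableOn
      (fun t : ℝ => ((4 * π) ^ (-(n:ℝ)/2) * a k) * t ^ ((k:ℝ) - (n:ℝ)/2 + (s - 1)))
      (Set.Ioc 0 1) := by
    intro k _
    have hk0 : (0:ℝ) ≤ (k:ℝ) := Nat.cast_nonneg k
    have : IntegrableOn (fun t : ℝ => t ^ ((k:ℝ) - (n:ℝ)/2 + (s - 1))) (Set.Ioc 0 1) := by
      rw [← intervalIntegrable_iff_integrableOn_Ioc_of_le zero_le_one]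
      exact intervalIntegral.intervalIntegrable_rpow' (by linarith)
    exact this.const_mul _
  have hsumint : IntegrableOn (fun t : ℝ => ∑ k ∈ Finset.range (n/2),
      ((4 * π) ^ (-(n:ℝ)/2) * a k) * t ^ ((k:ℝ) - (n:ℝ)/2 + (s - 1))) (Set.Ioc 0 1) :=
    integrable_finset_sum _ hterm
  have hIoc : IntegrableOn (fun t => (K t - 1/V) * t ^ (s - 1)) (Set.Ioc 0 1) := by
    refine IntegrableOn.congr_fun ((partA s hs0).add hsumint) ?_ measurableSet_Ioc
    exact fun t ht => (split t ht.1).symm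
  have hIoi : IntegrableOn (fun t => (K t - 1/V) * t ^ (s - 1)) (Set.Ioi 0) := by
    rw [← Set.Ioc_union_Ioi_eq_Ioi (zero_le_one : (0:ℝ) ≤ 1)]
    exact hIoc.union tail
  refine ⟨hIoi, ?_⟩
  -- value of the rpow integral
  have hval : ∀ r : ℝ, -1 < r → ∫ t in Set.Ioc (0:ℝ) 1, t ^ r = 1/(r + 1) := by
    intro r hr
    rw [← intervalIntegral.integral_of_le zero_le_one, _root_.integral_rpow (Or.inl hr),
      Real.one_rpow, Real.zero_rpow (by linarith)]
    ring
  -- compute the integral over (0,1]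
  have hIoc_val : ∫ t in Set.Ioc (0:ℝ) 1, (K t - 1/V) * t ^ (s - 1)
      = (∫ t in Set.Ioc (0:ℝ) 1, D t * t ^ (s - 1))
        + ∑ k ∈ Finset.range (n/2), a k / ((4 * π) ^ ((n:ℝ)/2) * (s - (n:ℝ)/2 + k)) := by
    rw [setIntegral_congr_fun measurableSet_Ioc (fun t ht => split t ht.1)]
    rw [integral_add (partA s hs0) hsumint, integral_finset_sum _ hterm]
    congr 1
    refine Finset.sum_congr rfl fun k hk => ?_
    have hk0 : (0:ℝ) ≤ (k:ℝ) := Nat.cast_nonneg k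
    rw [integral_const_mul, hval _ (by linarith)]
    have hpos : (0:ℝ) < s - (n:ℝ)/2 + k := by linarith
    have hne : ((4 * π) ^ ((n:ℝ)/2)) ≠ 0 := ne_of_gt (Real.rpow_pos_of_pos h4π _)
    have hexp : (k:ℝ) - (n:ℝ)/2 + (s - 1) + 1 = s - (n:ℝ)/2 + k := by ring
    rw [hexp, show -(n:ℝ)/2 = -((n:ℝ)/2) from by ring, Real.rpow_neg h4π.le]
    field_simp
  -- assemble
  rw [← Set.Ioc_union_Ioi_eq_Ioi (zero_le_one : (0:ℝ) ≤ 1),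
    setIntegral_union (Set.Ioc_disjoint_Ioi le_rfl) measurableSet_Ioi hIoc tail, hIoc_val]
  ring
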